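/- For every s, t ∈ [0,1] with s ≤ t and every R with (t−s)/3 < R ≤ 1 there exist analytic functions φ and q on 𝔻 with φ'(z) ≠ 0 and q(z)² ≠ 1 for all z ∈ 𝔻 such that sup_{z∈𝔻} (1−|z|²)²|Sφ(z)| = 2s, q(z)² = R·z² for all z ∈ 𝔻, and the shear f = h + conj(g) determined by h − g = φ and dilatation ω = q² satisfies Φ_f(0) > 2t. -/

import Mathlib

open Complex Metric ComplexConjugate

/-- The Schwarzian derivative `SF = (F''/F')' - (1/2)(F''/F')^2`. -/
noncomputable def schwarzian (F : ℂ → ℂ) (z : ℂ) : ℂ :=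
  deriv (fun w => deriv (deriv F) w / deriv F w) z
    - (1 / 2) * (deriv (deriv F) z / deriv F z) ^ 2

/-- The Schwarzian derivative of the shear `f = h + conj g` determined by `h - g = φ`
and dilatation `ω = g'/h' = q²`:
`Sf = Sφ + 2(q/(1-q²) + conj q/(1+|q|²))·(q'' - q'·φ''/φ')`
`   + 2q'²(1-|q|²+2q²|q|²)/((1-q²)²(1+|q|²)) - 4(q' conj q/(1+|q|²))²`. -/
noncomputable def Sshear (φ q : ℂ → ℂ) (z : ℂ) : ℂ :=
  schwarzian φ z
    + 2 * (q z / (1 - (q z) ^ 2) + conj (q z) / (1 + ((‖q z‖ : ℂ)) ^ 2)) *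
        (deriv (deriv q) z - deriv q z * (deriv (deriv φ) z / deriv φ z))
    + 2 * (deriv q z) ^ 2 *
        (1 - ((‖q z‖ : ℂ)) ^ 2
          + 2 * (q z) ^ 2 * ((‖q z‖ : ℂ)) ^ 2) /
        ((1 - (q z) ^ 2) ^ 2 * (1 + ((‖q z‖ : ℂ)) ^ 2))
    - 4 * (deriv q z * conj (q z) / (1 + ((‖q z‖ : ℂ)) ^ 2)) ^ 2

/-- `Φ_f(z) = |Sf(z)| + 4|q'(z)|²/(1+|q(z)|²)²` for the shear `f`. -/
noncomputable def PhiShear (φ q : ℂ → ℂ) (z : ℂ) : ℝ :=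
  ‖Sshear φ q z‖
    + 4 * (‖deriv q z‖) ^ 2 / (1 + (‖q z‖) ^ 2) ^ 2

open MeasureTheory intervalIntegral

lemma exists_primitive {f : ℂ → ℂ} (hf : DifferentiableOn ℂ f (ball 0 1)) :
    ∃ F : ℂ → ℂ, F 0 = 0 ∧ ∀ z ∈ ball (0:ℂ) 1, HasDerivAt F (f z) z := by
  have hfa : AnalyticOnNhd ℂ f (ball 0 1) := hf.analyticOnNhd isOpen_ball
  have hfc : ContinuousOn f (ball 0 1) := hf.continuousOn
  have hfc' : ContinuousOn (deriv f) (ball 0 1) := (hfa.deriv).continuousOn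
  refine ⟨fun z => ∫ t in (0:ℝ)..1, z * f ((t:ℂ) * z), by simp, ?_⟩
  intro z₀ hz₀
  rw [mem_ball_zero_iff] at hz₀
  set ε : ℝ := (1 - ‖z₀‖)/2 with hεdef
  have hε0 : 0 < ε := by have := norm_nonneg z₀; simp only [hεdef]; linarith
  have hr1 : ‖z₀‖ + ε < 1 := by simp only [hεdef]; linarith
  have hsub : closedBall (0:ℂ) (‖z₀‖ + ε) ⊆ ball 0 1 := closedBall_subset_ball hr1
  -- membership helper
  have hmem : ∀ (x : ℂ), x ∈ ball z₀ ε → ∀ (u : ℝ), |u| ≤ 1 →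
      (u:ℂ) * x ∈ closedBall (0:ℂ) (‖z₀‖ + ε) := by
    intro x hx u hu
    rw [mem_ball] at hx
    have hxn : ‖x‖ < ‖z₀‖ + ε := by
      calc ‖x‖ ≤ ‖x - z₀‖ + ‖z₀‖ := by
            simpa using norm_add_le (x - z₀) z₀
        _ < ε + ‖z₀‖ := by
            have : dist x z₀ = ‖x - z₀‖ := dist_eq_norm x z₀
            linarith [hx, this ▸ hx]
        _ = ‖z₀‖ + ε := by ring
    rw [mem_closedBall, dist_zero_right, norm_mul, Complex.norm_real, Real.norm_eq_abs]
    nlinarith [norm_nonneg x, abs_nonneg u]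
  obtain ⟨C1, hC1⟩ := (isCompact_closedBall (0:ℂ) (‖z₀‖ + ε)).exists_bound_of_continuousOn
    (hfc.mono hsub)
  obtain ⟨C2, hC2⟩ := (isCompact_closedBall (0:ℂ) (‖z₀‖ + ε)).exists_bound_of_continuousOn
    (hfc'.mono hsub)
  set F' : ℂ → ℝ → ℂ := fun x t => f ((t:ℂ)*x) + x * (deriv f ((t:ℂ)*x) * (t:ℂ)) with hF'def
  have hz₀mem : z₀ ∈ ball z₀ ε := mem_ball_self hε0
  -- continuity on uIcc for the integrand at fixed x
  have hcont : ∀ x ∈ ball z₀ ε, ContinuousOn (fun u : ℝ => x * f ((u:ℂ) * x)) (Set.uIcc (0:ℝ) 1) := by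
    intro x hx
    apply ContinuousOn.mul continuousOn_const
    apply hfc.comp
    · exact (Complex.continuous_ofReal.mul continuous_const).continuousOn
    · intro u hu
      apply hsub
      apply hmem x hx
      rw [Set.uIcc_of_le (by norm_num : (0:ℝ) ≤ 1)] at hu
      rw [abs_le]; exact ⟨by linarith [hu.1], hu.2⟩
  have hcont' : ContinuousOn (F' z₀) (Set.uIcc (0:ℝ) 1) := by
    apply ContinuousOn.add
    · apply hfc.comp
      · exact (Complex.continuous_ofReal.mul continuous_const).continuousOn
      · intro u hu
        apply hsub; apply hmem z₀ hz₀mem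
        rw [Set.uIcc_of_le (by norm_num : (0:ℝ) ≤ 1)] at hu
        rw [abs_le]; exact ⟨by linarith [hu.1], hu.2⟩
    · apply ContinuousOn.mul continuousOn_const
      apply ContinuousOn.mul _ Complex.continuous_ofReal.continuousOn
      apply hfc'.comp
      · exact (Complex.continuous_ofReal.mul continuous_const).continuousOn
      · intro u hu
        apply hsub; apply hmem z₀ hz₀mem
        rw [Set.uIcc_of_le (by norm_num : (0:ℝ) ≤ 1)] at hu
        rw [abs_le]; exact ⟨by linarith [hu.1], hu.2⟩
  have main := intervalIntegral.hasDerivAt_integral_of_dominated_loc_of_deriv_le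
    (μ := volume) (F := fun x (t : ℝ) => x * f ((t:ℂ)*x)) (F' := F') (x₀ := z₀)
    (a := 0) (b := 1) (bound := fun _ => C1 + C2) (ball_mem_nhds z₀ hε0)
    (by -- hF_meas
      filter_upwards [ball_mem_nhds z₀ hε0] with x hx
      exact ((hcont x hx).mono (Set.uIoc_subset_uIcc)).aestronglyMeasurable measurableSet_uIoc)
    (by -- hF_int
      exact (hcont z₀ hz₀mem).intervalIntegrable)
    (by -- hF'_meas
      exact ((hcont'.mono (Set.uIoc_subset_uIcc)).aestronglyMeasurable measurableSet_uIoc))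
    (by -- h_bound
      refine Filter.Eventually.of_forall (fun u hu x hx => ?_)
      have hu' : |u| ≤ 1 := by
        rw [Set.uIoc_of_le (by norm_num : (0:ℝ) ≤ 1)] at hu
        rw [abs_le]; exact ⟨by linarith [hu.1.le], hu.2⟩
      have hmem1 := hmem x hx u hu'
      have h1 : ‖f ((u:ℂ)*x)‖ ≤ C1 := hC1 _ hmem1
      have h2 : ‖deriv f ((u:ℂ)*x)‖ ≤ C2 := hC2 _ hmem1
      have hxn : ‖x‖ ≤ 1 := by
        have := hsub (hmem x hx 1 (by norm_num))
        rw [mem_ball_zero_iff] at this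
        simpa using this.le
      calc ‖F' x u‖ ≤ ‖f ((u:ℂ)*x)‖ + ‖x * (deriv f ((u:ℂ)*x) * (u:ℂ))‖ := norm_add_le _ _
        _ = ‖f ((u:ℂ)*x)‖ + ‖x‖ * (‖deriv f ((u:ℂ)*x)‖ * |u|) := by
            rw [norm_mul, norm_mul, Complex.norm_real, Real.norm_eq_abs]
        _ ≤ C1 + C2 := by
            have hC2' : 0 ≤ C2 := le_trans (norm_nonneg _) h2
            have t1 : ‖deriv f ((u:ℂ)*x)‖ * |u| ≤ C2 * 1 :=
              mul_le_mul h2 hu' (abs_nonneg u) hC2'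
            have t2 : ‖x‖ * (‖deriv f ((u:ℂ)*x)‖ * |u|) ≤ 1 * (C2 * 1) :=
              mul_le_mul hxn t1 (by positivity) one_pos.le
            linarith)
    (by exact intervalIntegrable_const)
    (by -- h_diff
      refine Filter.Eventually.of_forall (fun u hu x hx => ?_)
      have hu' : |u| ≤ 1 := by
        rw [Set.uIoc_of_le (by norm_num : (0:ℝ) ≤ 1)] at hu
        rw [abs_le]; exact ⟨by linarith [hu.1.le], hu.2⟩
      have hmem1 : (u:ℂ)*x ∈ ball (0:ℂ) 1 := hsub (hmem x hx u hu')
      have hdf : HasDerivAt f (deriv f ((u:ℂ)*x)) ((u:ℂ)*x) :=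
        (hf.differentiableAt (isOpen_ball.mem_nhds hmem1)).hasDerivAt
      have hin : HasDerivAt (fun x : ℂ => (u:ℂ)*x) (u:ℂ) x := by
        simpa using (hasDerivAt_id x).const_mul (u:ℂ)
      have hcomp : HasDerivAt (fun x : ℂ => f ((u:ℂ)*x)) (deriv f ((u:ℂ)*x) * (u:ℂ)) x :=
        hdf.comp x hin
      have := (hasDerivAt_id' x).fun_mul hcomp
      simpa [F', hF'def] using this)
  obtain ⟨hint, hder⟩ := main
  -- now compute the integral of F' z₀
  have hFTC : ∀ u ∈ Set.uIcc (0:ℝ) 1,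
      HasDerivAt (fun v : ℝ => (v:ℂ) * f ((v:ℂ)*z₀)) (F' z₀ u) u := by
    intro u hu
    have hu' : |u| ≤ 1 := by
      rw [Set.uIcc_of_le (by norm_num : (0:ℝ) ≤ 1)] at hu
      rw [abs_le]; exact ⟨by linarith [hu.1], hu.2⟩
    have hmem1 : (u:ℂ)*z₀ ∈ ball (0:ℂ) 1 := hsub (hmem z₀ hz₀mem u hu')
    have hdf : HasDerivAt f (deriv f ((u:ℂ)*z₀)) ((u:ℂ)*z₀) :=
      (hf.differentiableAt (isOpen_ball.mem_nhds hmem1)).hasDerivAt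
    have hmc : HasDerivAt (fun w : ℂ => w * z₀) z₀ (u:ℂ) := by
      simpa using (hasDerivAt_id ((u:ℂ))).mul_const z₀
    have hE : HasDerivAt (fun w : ℂ => f (w * z₀)) (deriv f ((u:ℂ)*z₀) * z₀) (u:ℂ) :=
      HasDerivAt.comp (u:ℂ) hdf hmc
    have hEr : HasDerivAt (fun v : ℝ => f ((v:ℂ) * z₀)) (deriv f ((u:ℂ)*z₀) * z₀) u :=
      hE.comp_ofReal
    have hid : HasDerivAt (fun v : ℝ => (v:ℂ)) 1 u := Complex.ofRealCLM.hasDerivAt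
    have := hid.fun_mul hEr
    have e : F' z₀ u = 1 * f (↑u * z₀) + ↑u * (deriv f (↑u * z₀) * z₀) := by
      simp only [hF'def]; ring
    rw [e]; exact this
  have hval : (∫ u in (0:ℝ)..1, F' z₀ u) = f z₀ := by
    rw [intervalIntegral.integral_eq_sub_of_hasDerivAt hFTC hint]
    simp
  rw [hval] at hder
  exact hder

lemma main_construction (s t R : ℝ) (φ : ℂ → ℂ) (hφ : Differentiable ℂ φ)
    (hd : ∀ z ∈ ball (0:ℂ) 1, deriv φ z ≠ 0)
    (hS : ∀ z : ℂ, schwarzian φ z = 2 * (s:ℂ))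
    (hs0 : 0 ≤ s) (hR0 : 0 < R) (hR2 : R ≤ 1) (hRt : (t - s) / 3 < R) :
    ∃ φ' q h g : ℂ → ℂ,
      AnalyticOnNhd ℂ φ' (ball 0 1) ∧ AnalyticOnNhd ℂ q (ball 0 1) ∧
      (∀ z ∈ ball (0 : ℂ) 1, deriv φ' z ≠ 0) ∧
      (∀ z ∈ ball (0 : ℂ) 1, (q z) ^ 2 ≠ 1) ∧
      sSup ((fun z => (1 - ‖z‖ ^ 2) ^ 2 * ‖schwarzian φ' z‖) ''
        ball (0 : ℂ) 1) = 2 * s ∧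
      (∀ z ∈ ball (0 : ℂ) 1, (q z) ^ 2 = (R : ℂ) * z ^ 2) ∧
      AnalyticOnNhd ℂ h (ball 0 1) ∧ AnalyticOnNhd ℂ g (ball 0 1) ∧
      (∀ z ∈ ball (0 : ℂ) 1, h z - g z = φ' z) ∧
      g 0 = 0 ∧
      (∀ z ∈ ball (0 : ℂ) 1, deriv g z = (q z) ^ 2 * deriv h z) ∧
      2 * t < PhiShear φ' q 0 := by
  have hφana : AnalyticOnNhd ℂ φ (ball 0 1) :=
    hφ.differentiableOn.analyticOnNhd isOpen_ball
  set a : ℂ := ((Real.sqrt R : ℝ) : ℂ) with hadef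
  have ha2 : a ^ 2 = (R : ℂ) := by
    rw [hadef, ← Complex.ofReal_pow, Real.sq_sqrt hR0.le]
  set q : ℂ → ℂ := fun z => a * z with hqdef
  have hqana : AnalyticOnNhd ℂ q (ball 0 1) :=
    fun z _ => (analyticAt_const.mul (analyticAt_id)).congr (by rfl)
  have hq' : deriv q = fun _ => a := by
    funext z
    have := ((hasDerivAt_id' z).const_mul a).deriv; rw [mul_one] at this; exact this
  have hq2 : ∀ z : ℂ, q z ^ 2 = (R : ℂ) * z ^ 2 := by
    intro z; rw [hqdef]; simp only [mul_pow]; rw [ha2]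
  have habs : ∀ z ∈ ball (0:ℂ) 1, ‖(R:ℂ) * z ^ 2‖ < 1 := by
    intro z hz
    rw [mem_ball_zero_iff] at hz
    rw [norm_mul, norm_pow, Complex.norm_real, Real.norm_eq_abs, _root_.abs_of_nonneg hR0.le]
    nlinarith [norm_nonneg z]
  have hden : ∀ z ∈ ball (0:ℂ) 1, (1 : ℂ) - (R:ℂ) * z ^ 2 ≠ 0 := by
    intro z hz h0
    have h1 : (R:ℂ) * z ^ 2 = 1 := by linear_combination -h0
    have := habs z hz
    rw [h1] at this; simp at this
  set f : ℂ → ℂ := fun z => deriv φ z / (1 - (R:ℂ) * z ^ 2) with hfdef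
  have hfd : DifferentiableOn ℂ f (ball 0 1) := by
    apply DifferentiableOn.div
    · exact (hφana.deriv).differentiableOn
    · exact ((differentiable_const (1:ℂ)).sub ((differentiable_const ((R:ℂ))).mul
        (differentiable_pow 2))).differentiableOn
    · exact hden
  obtain ⟨F, hF0, hFd⟩ := exists_primitive hfd
  set h : ℂ → ℂ := fun z => F z + φ 0 with hhdef
  set g : ℂ → ℂ := fun z => h z - φ z with hgdef
  have hhd : ∀ z ∈ ball (0:ℂ) 1, HasDerivAt h (f z) z :=
    fun z hz => (hFd z hz).add_const _
  have hhdiff : DifferentiableOn ℂ h (ball 0 1) :=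
    fun z hz => ((hhd z hz).differentiableAt).differentiableWithinAt
  have hhana : AnalyticOnNhd ℂ h (ball 0 1) := hhdiff.analyticOnNhd isOpen_ball
  have hgana : AnalyticOnNhd ℂ g (ball 0 1) := hhana.sub hφana
  refine ⟨φ, q, h, g, hφana, hqana, hd, ?_, ?_, fun z _ => hq2 z, hhana, hgana,
    fun z _ => by simp [hgdef], by simp [hgdef, hhdef, hF0], ?_, ?_⟩
  · -- q^2 ≠ 1
    intro z hz h1
    rw [hq2 z] at h1
    have := habs z hz
    rw [h1] at this; simp at this
  · -- sSup
    have hbound : ∀ y ∈ ((fun z => (1 - ‖z‖ ^ 2) ^ 2 *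
        ‖schwarzian φ z‖) '' ball (0 : ℂ) 1), y ≤ 2 * s := by
      rintro y ⟨z, hz, rfl⟩
      rw [mem_ball_zero_iff] at hz
      have h1 : ‖schwarzian φ z‖ = 2 * s := by
        rw [hS z]
        rw [show (2 * (s:ℂ)) = ((2*s : ℝ) : ℂ) by push_cast; ring,
          Complex.norm_real, Real.norm_eq_abs, _root_.abs_of_nonneg (by linarith)]
      show (1 - ‖z‖ ^ 2) ^ 2 * ‖schwarzian φ z‖ ≤ 2 * s
      rw [h1]
      have hc0 : 0 ≤ ‖z‖ := norm_nonneg z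
      have hc2 : ‖z‖ ^ 2 ≤ 1 := by nlinarith
      have hc3 : (1 - ‖z‖ ^ 2) ^ 2 ≤ 1 := by nlinarith
      nlinarith
    apply le_antisymm
    · apply csSup_le
      · exact ⟨_, Set.mem_image_of_mem _ (mem_ball_self one_pos)⟩
      · exact hbound
    · apply le_csSup ⟨2 * s, hbound⟩
      refine ⟨0, mem_ball_self one_pos, ?_⟩
      show (1 - ‖(0:ℂ)‖ ^ 2) ^ 2 * ‖schwarzian φ 0‖ = 2 * s
      rw [hS 0, show (2 * (s:ℂ)) = ((2*s : ℝ) : ℂ) by push_cast; ring,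
        Complex.norm_real, Real.norm_eq_abs, _root_.abs_of_nonneg (by linarith)]
      simp
  · -- deriv g = q^2 deriv h
    intro z hz
    have hdg : deriv g z = f z - deriv φ z :=
      ((hhd z hz).sub (hφ z).hasDerivAt).deriv
    rw [hdg, (hhd z hz).deriv, hq2 z, hfdef]
    field_simp [hden z hz]
    ring
  · -- PhiShear
    have e1 : q 0 = 0 := by simp [hqdef]
    have e2 : deriv q 0 = a := by rw [hq']
    have e3 : deriv (deriv q) 0 = 0 := by rw [hq']; simp
    have hSs : Sshear φ q 0 = 2 * (s:ℂ) + 2 * (R:ℂ) := by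
      rw [Sshear, e1, e2, e3, hS 0]
      simp [ha2]
    rw [PhiShear, hSs, e1, e2]
    have habsa : ‖a‖ = Real.sqrt R := by
      rw [hadef, Complex.norm_real, Real.norm_eq_abs, _root_.abs_of_nonneg (Real.sqrt_nonneg R)]
    rw [habsa]
    have hsq : Real.sqrt R ^ 2 = R := Real.sq_sqrt hR0.le
    have habsS : ‖2 * (s:ℂ) + 2 * (R:ℂ)‖ = 2*s + 2*R := by
      rw [show (2 * (s:ℂ) + 2 * (R:ℂ)) = ((2*s + 2*R : ℝ) : ℂ) by push_cast; ring,
        Complex.norm_real, Real.norm_eq_abs, _root_.abs_of_nonneg (by linarith)]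
    rw [habsS]
    simp [hsq]
    linarith

lemma schwarzian_id : ∀ z : ℂ, schwarzian (fun w => w) z = 2 * ((0:ℝ):ℂ) := by
  intro z
  have h1 : deriv (fun w : ℂ => w) = fun _ => (1:ℂ) := by
    funext w; simp
  have h2 : deriv (fun _ : ℂ => (1:ℂ)) = fun _ => (0:ℂ) := by
    funext w; simp
  rw [schwarzian, h1, h2]
  simp

lemma schwarzian_exp (s : ℝ) (hs : 0 < s) :
    ∀ z : ℂ, schwarzian (fun w => Complex.exp ((2 * I * (Real.sqrt s : ℂ)) * w)) z
      = 2 * ((s:ℝ):ℂ) := by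
  set b : ℂ := 2 * I * ((Real.sqrt s : ℝ) : ℂ) with hbdef
  have hsq : ((Real.sqrt s : ℝ) : ℂ) ^ 2 = (s:ℂ) := by
    rw [← Complex.ofReal_pow, Real.sq_sqrt hs.le]
  have hb2 : b ^ 2 = -4 * (s:ℂ) := by
    rw [hbdef]
    calc (2 * I * ((Real.sqrt s : ℝ) : ℂ)) ^ 2
        = 4 * I ^ 2 * ((Real.sqrt s : ℝ) : ℂ) ^ 2 := by ring
      _ = -4 * (s:ℂ) := by rw [Complex.I_sq, hsq]; ring
  have hb0 : b ≠ 0 := by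
    have h1 : ((Real.sqrt s : ℝ) : ℂ) ≠ 0 := by
      exact_mod_cast (Real.sqrt_pos.2 hs).ne'
    exact mul_ne_zero (mul_ne_zero two_ne_zero I_ne_zero) h1
  set φ : ℂ → ℂ := fun w => Complex.exp (b * w) with hφdef
  have hder1 : ∀ z : ℂ, HasDerivAt φ (b * Complex.exp (b * z)) z := by
    intro z
    have H := (Complex.hasDerivAt_exp (b * z)).comp z ((hasDerivAt_id z).const_mul b)
    have H' : HasDerivAt φ (Complex.exp (b * z) * (b * 1)) z := H
    convert H' using 1; ring
  have hφ' : deriv φ = fun z => b * Complex.exp (b * z) := funext fun z => (hder1 z).deriv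
  have hφ'' : deriv (deriv φ) = fun z => b * (b * Complex.exp (b * z)) := by
    rw [hφ']; funext z; exact ((hder1 z).const_mul b).deriv
  intro z
  have hne : ∀ w : ℂ, b * Complex.exp (b * w) ≠ 0 :=
    fun w => mul_ne_zero hb0 (Complex.exp_ne_zero _)
  have hratio : (fun w => deriv (deriv φ) w / deriv φ w) = fun _ => b := by
    funext w
    rw [hφ'', hφ']
    exact mul_div_cancel_right₀ b (hne w)
  show schwarzian φ z = 2 * ((s:ℝ):ℂ)
  rw [schwarzian, hratio, hφ'', hφ', mul_div_cancel_right₀ b (hne z), deriv_const]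
  rw [hb2]
  ring

lemma exp_deriv_ne (s : ℝ) (hs : 0 < s) :
    ∀ z : ℂ, deriv (fun w => Complex.exp ((2 * I * (Real.sqrt s : ℂ)) * w)) z ≠ 0 := by
  set b : ℂ := 2 * I * ((Real.sqrt s : ℝ) : ℂ) with hbdef
  have hb0 : b ≠ 0 := by
    have h1 : ((Real.sqrt s : ℝ) : ℂ) ≠ 0 := by
      exact_mod_cast (Real.sqrt_pos.2 hs).ne'
    exact mul_ne_zero (mul_ne_zero two_ne_zero I_ne_zero) h1
  intro z
  have H := (Complex.hasDerivAt_exp (b * z)).comp z ((hasDerivAt_id z).const_mul b)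
  have H' : HasDerivAt (fun w => Complex.exp (b * w)) (Complex.exp (b * z) * (b * 1)) z := H
  rw [H'.deriv]
  simpa using mul_ne_zero (Complex.exp_ne_zero (b * z)) hb0

theorem stmt_8 (s t R : ℝ) (hs : s ∈ Set.Icc (0 : ℝ) 1) (ht : t ∈ Set.Icc (0 : ℝ) 1)
    (hst : s ≤ t) (hR1 : (t - s) / 3 < R) (hR2 : R ≤ 1) :
    ∃ φ q h g : ℂ → ℂ,
      AnalyticOnNhd ℂ φ (ball 0 1) ∧ AnalyticOnNhd ℂ q (ball 0 1) ∧
      (∀ z ∈ ball (0 : ℂ) 1, deriv φ z ≠ 0) ∧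
      (∀ z ∈ ball (0 : ℂ) 1, (q z) ^ 2 ≠ 1) ∧
      sSup ((fun z => (1 - ‖z‖ ^ 2) ^ 2 * ‖schwarzian φ z‖) ''
        ball (0 : ℂ) 1) = 2 * s ∧
      (∀ z ∈ ball (0 : ℂ) 1, (q z) ^ 2 = (R : ℂ) * z ^ 2) ∧
      AnalyticOnNhd ℂ h (ball 0 1) ∧ AnalyticOnNhd ℂ g (ball 0 1) ∧
      (∀ z ∈ ball (0 : ℂ) 1, h z - g z = φ z) ∧
      g 0 = 0 ∧
      (∀ z ∈ ball (0 : ℂ) 1, deriv g z = (q z) ^ 2 * deriv h z) ∧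
      2 * t < PhiShear φ q 0 := by
  have hR0 : 0 < R := lt_of_le_of_lt (div_nonneg (by linarith) (by norm_num)) hR1
  rcases eq_or_lt_of_le hs.1 with hs0 | hs0
  · subst hs0
    exact main_construction 0 t R (fun w => w) differentiable_id
      (fun z _ => by simp) schwarzian_id le_rfl hR0 hR2 hR1
  · exact main_construction s t R (fun w => Complex.exp ((2 * I * (Real.sqrt s : ℂ)) * w))
      ((differentiable_id.const_mul _).cexp)
      (fun z _ => exp_deriv_ne s hs0 z) (schwarzian_exp s hs0) hs.1 hR0 hR2 hR1
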